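/- For M > 0, Λ > 0 with 9M²Λ < 1, the coefficient of the principal commutator term, K(r) := 2√(1-9M²Λ)/((1-μ(r))·r·√(1+6M/r)), is strictly positive for all r in the open interval (r_+, r̄_+), and (1-μ(r))·K(r) extends to a continuous strictly positive function on the closed interval [r_+, r̄_+]. -/

import Mathlib

noncomputable def μ (M Λ r : ℝ) : ℝ := 2*M/r + Λ*r^2/3

noncomputable def Kcoef (M Λ r : ℝ) : ℝ :=
  2 * Real.sqrt (1 - 9*M^2*Λ) / ((1 - μ M Λ r) * r * Real.sqrt (1 + 6*M/r))

theorem principal_commutator_coefficient_positive (M Λ rp rb : ℝ)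
    (hM : 0 < M) (hΛ : 0 < Λ) (hsub : 9*M^2*Λ < 1) (hrp : 0 < rp)
    (hrprb : rp < rb) (hroot1 : 1 - μ M Λ rp = 0) (hroot2 : 1 - μ M Λ rb = 0) :
    (∀ r ∈ Set.Ioo rp rb, 0 < Kcoef M Λ r) ∧
    ContinuousOn (fun r => 2 * Real.sqrt (1 - 9*M^2*Λ) / (r * Real.sqrt (1 + 6*M/r)))
      (Set.Icc rp rb) ∧
    (∀ r ∈ Set.Icc rp rb,
      0 < 2 * Real.sqrt (1 - 9*M^2*Λ) / (r * Real.sqrt (1 + 6*M/r))) ∧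
    (∀ r ∈ Set.Ioo rp rb,
      (1 - μ M Λ r) * Kcoef M Λ r
        = 2 * Real.sqrt (1 - 9*M^2*Λ) / (r * Real.sqrt (1 + 6*M/r))) := by
  set f : ℝ → ℝ := fun r => r - 2*M - Λ*r^3/3 with hf
  have hd1 : ∀ x : ℝ, HasDerivAt f (1 - Λ*x^2) x := by
    intro x
    have h := ((hasDerivAt_id x).sub_const (2*M)).sub
      (((hasDerivAt_pow 3 x).const_mul Λ).div_const 3)
    refine h.congr_deriv ?_
    push_cast
    ring
  have hd2 : ∀ x : ℝ, HasDerivAt (fun r : ℝ => 1 - Λ*r^2) (-(2*Λ*x)) x := by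
    intro x
    have h := ((hasDerivAt_pow 2 x).const_mul Λ).const_sub 1
    refine h.congr_deriv ?_
    push_cast
    ring
  have hconc : StrictConcaveOn ℝ (Set.Ici (0:ℝ)) f := by
    apply strictConcaveOn_of_deriv2_neg (convex_Ici 0)
    · exact (Continuous.continuousOn (by continuity))
    · intro x hx
      rw [interior_Ici] at hx
      have h1 : deriv f = fun r : ℝ => 1 - Λ*r^2 := funext fun y => (hd1 y).deriv
      have h2 : deriv^[2] f x = deriv (deriv f) x := rfl
      rw [h2, h1, (hd2 x).deriv]
      nlinarith [hx.out]
  have hfr : ∀ r : ℝ, r ≠ 0 → f r = r * (1 - μ M Λ r) := by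
    intro r hr
    simp only [hf, μ]
    field_simp
    ring_nf
  have hfrp : f rp = 0 := by rw [hfr rp (ne_of_gt hrp), hroot1, mul_zero]
  have hfrb : f rb = 0 := by rw [hfr rb (ne_of_gt (hrp.trans hrprb)), hroot2, mul_zero]
  have hposμ : ∀ r ∈ Set.Ioo rp rb, 0 < 1 - μ M Λ r := by
    intro r hr
    obtain ⟨h1, h2⟩ := hr
    have hr0 : 0 < r := hrp.trans h1
    set a : ℝ := (rb - r)/(rb - rp) with ha
    set b : ℝ := (r - rp)/(rb - rp) with hb
    have hne : rb - rp ≠ 0 := sub_ne_zero.mpr hrprb.ne'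
    have hab : a + b = 1 := by
      rw [ha, hb, ← add_div, div_eq_one_iff_eq hne]; ring
    have ha0 : 0 < a := by apply div_pos <;> linarith
    have hb0 : 0 < b := by apply div_pos <;> linarith
    have hcomb : a • rp + b • rb = r := by
      simp only [smul_eq_mul, ha, hb]
      rw [div_mul_eq_mul_div, div_mul_eq_mul_div, ← add_div,
        div_eq_iff hne]
      ring
    have := hconc.2 (le_of_lt hrp) (le_of_lt (hrp.trans hrprb))
      (ne_of_lt hrprb) ha0 hb0 hab
    rw [hcomb, hfrp, hfrb, smul_zero, smul_zero, add_zero] at this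
    have hfr' : 0 < r * (1 - μ M Λ r) := by rw [← hfr r (ne_of_gt hr0)]; exact this
    nlinarith [hfr']
  have hsqΛ : 0 < Real.sqrt (1 - 9*M^2*Λ) := Real.sqrt_pos.mpr (by linarith)
  have hsq : ∀ r : ℝ, 0 < r → 0 < Real.sqrt (1 + 6*M/r) := by
    intro r hr
    exact Real.sqrt_pos.mpr (by positivity)
  refine ⟨?_, ?_, ?_, ?_⟩
  · intro r hr
    have hr0 : 0 < r := hrp.trans hr.1
    exact div_pos (by positivity)
      (mul_pos (mul_pos (hposμ r hr) hr0) (hsq r hr0))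
  · apply ContinuousOn.div continuousOn_const
    · apply ContinuousOn.mul continuousOn_id
      apply ContinuousOn.sqrt
      apply ContinuousOn.add continuousOn_const
      apply ContinuousOn.div continuousOn_const continuousOn_id
      intro x hx
      exact ne_of_gt (lt_of_lt_of_le hrp hx.1)
    · intro x hx
      have hx0 : 0 < x := lt_of_lt_of_le hrp hx.1
      exact ne_of_gt (mul_pos hx0 (hsq x hx0))
  · intro r hr
    have hr0 : 0 < r := lt_of_lt_of_le hrp hr.1
    exact div_pos (by positivity) (mul_pos hr0 (hsq r hr0))
  · intro r hr
    have hr0 : 0 < r := hrp.trans hr.1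
    have hμ := hposμ r hr
    have hs := hsq r hr0
    simp only [Kcoef]
    field_simp
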